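/- Let k be a field of characteristic ≠ 2 and m ≥ 0 an integer. Let n = 3m + 1 and let V = kⁿ with basis e₁, …, e_{m+1}, f₁, …, f_m, g₁, …, g_m. Define the sextuple of type A(3m+1, 0): I₁ = span{eᵢ − fᵢ : 1 ≤ i ≤ m}, I₂ = span{g₁, …, g_m}, I₃ = span{fᵢ − gᵢ : 1 ≤ i ≤ m}, C₁ = span{e₁, …, e_{m+1}, f₁, …, f_m}, C₂ = span{e₁, …, e_{m+1}, g₁, …, g_m}, C₃ = span{e₁, e₂ − f₁, …, e_{m+1} − f_m, f₁ − g₁, …, f_m − g_m}. Then there exists a nondegenerate bilinear form B on V with B(y, x) = (−1)^m B(x, y) for all x, y ∈ V, such that for each i ∈ {1, 2, 3} the B-orthogonal {v ∈ V : B(v, w) = 0 for all w ∈ Iᵢ} equals Cᵢ. In particular, for m odd this sextuple admits a compatible symplectic form, and for m even a compatible symmetric form. -/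

import Mathlib

open Submodule

section A3mPlus1

variable (k : Type*) [Field k] (m : ℕ)

/-- The ambient space of the standard-basis normal form of `A(3m+1, 0)`:
`k^{m+1} × k^m × k^m` with basis `e₁, …, e_{m+1}, f₁, …, f_m, g₁, …, g_m`. -/
abbrev AmbA (k : Type*) [Field k] (m : ℕ) :=
  (Fin (m + 1) → k) × (Fin m → k) × (Fin m → k)

/-- The basis vector `eᵢ`. -/
def ev (i : Fin (m + 1)) : AmbA k m := (Pi.single i 1, 0, 0)

/-- The basis vector `fᵢ`. -/
def fv (i : Fin m) : AmbA k m := (0, Pi.single i 1, 0)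

/-- The basis vector `gᵢ`. -/
def gv (i : Fin m) : AmbA k m := (0, 0, Pi.single i 1)

/-- `I₁ = span{eᵢ − fᵢ : 1 ≤ i ≤ m}`. -/
def IA1 : Submodule k (AmbA k m) :=
  span k (Set.range fun i : Fin m => ev k m i.castSucc - fv k m i)

/-- `I₂ = span{g₁, …, g_m}`. -/
def IA2 : Submodule k (AmbA k m) := span k (Set.range (gv k m))

/-- `I₃ = span{fᵢ − gᵢ : 1 ≤ i ≤ m}`. -/
def IA3 : Submodule k (AmbA k m) :=
  span k (Set.range fun i : Fin m => fv k m i - gv k m i)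

/-- `C₁ = span{e₁, …, e_{m+1}, f₁, …, f_m}`. -/
def CA1 : Submodule k (AmbA k m) :=
  span k (Set.range (ev k m) ∪ Set.range (fv k m))

/-- `C₂ = span{e₁, …, e_{m+1}, g₁, …, g_m}`. -/
def CA2 : Submodule k (AmbA k m) :=
  span k (Set.range (ev k m) ∪ Set.range (gv k m))

/-- `C₃ = span{e₁, e₂ − f₁, …, e_{m+1} − f_m, f₁ − g₁, …, f_m − g_m}`. -/
def CA3 : Submodule k (AmbA k m) :=
  span k (({ev k m 0} : Set (AmbA k m))
    ∪ (Set.range fun i : Fin m => ev k m i.succ - fv k m i)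
    ∪ (Set.range fun i : Fin m => fv k m i - gv k m i))

end A3mPlus1


namespace StmtAux
noncomputable section




/-- Guarded binomial coefficient on `ℤ`: zero unless `0 ≤ b ≤ a`. -/
def ch (a b : ℤ) : ℤ := if 0 ≤ b ∧ b ≤ a then ((a.toNat).choose b.toNat : ℤ) else 0

lemma ch_eq_zero_of_neg {a b : ℤ} (h : b < 0) : ch a b = 0 := by
  simp only [ch, if_neg]; omega

lemma ch_eq_zero_of_lt {a b : ℤ} (h : a < b) : ch a b = 0 := by
  simp only [ch, if_neg]; omega

lemma ch_eq_choose {a b : ℤ} (ha : 0 ≤ a) (hb : 0 ≤ b) :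
    ch a b = ((a.toNat).choose b.toNat : ℤ) := by
  by_cases h : b ≤ a
  · simp [ch, hb, h]
  · rw [ch, if_neg (by omega), Nat.choose_eq_zero_of_lt (by omega), Nat.cast_zero]

lemma ch_zero_right {a : ℤ} (ha : 0 ≤ a) : ch a 0 = 1 := by
  rw [ch_eq_choose ha le_rfl]; simp

lemma ch_self {a : ℤ} (ha : 0 ≤ a) : ch a a = 1 := by
  rw [ch_eq_choose ha ha]; simp

lemma ch_pascal {a : ℤ} (b : ℤ) (ha : 0 ≤ a) :
    ch (a + 1) (b + 1) = ch a b + ch a (b + 1) := by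
  rcases lt_trichotomy b (-1) with hb | hb | hb
  · rw [ch_eq_zero_of_neg (by omega), ch_eq_zero_of_neg (by omega),
      ch_eq_zero_of_neg (by omega)]; ring
  · subst_eqs
    have h1 : (-1 : ℤ) + 1 = 0 := by ring
    rw [h1, ch_zero_right (by omega), ch_eq_zero_of_neg (by norm_num), ch_zero_right ha]
    ring
  · have hb0 : 0 ≤ b := by omega
    rw [ch_eq_choose (by omega) (by omega), ch_eq_choose ha hb0, ch_eq_choose ha (by omega)]
    have h1 : (a + 1).toNat = a.toNat + 1 := by omega
    have h2 : (b + 1).toNat = b.toNat + 1 := by omega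
    rw [h1, h2, Nat.choose_succ_succ, Nat.cast_add]

lemma ch_symm {a : ℤ} (b : ℤ) (ha : 0 ≤ a) : ch a b = ch a (a - b) := by
  rcases lt_trichotomy b 0 with hb | hb | hb
  · rw [ch_eq_zero_of_neg hb, ch_eq_zero_of_lt (by omega)]
  · subst_eqs; rw [ch_zero_right ha, sub_zero, ch_self ha]
  · by_cases h : b ≤ a
    · rw [ch_eq_choose ha (by omega), ch_eq_choose ha (by omega)]
      have h1 : (a - b).toNat = a.toNat - b.toNat := by omega
      rw [h1, Nat.choose_symm (by omega)]
    · rw [ch_eq_zero_of_lt (by omega), ch_eq_zero_of_neg (by omega)]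




/-- The entries of the Gram-type matrix `P`, as integers. `x` is the row, `y` the column. -/
def Fm (m x y : ℕ) : ℤ :=
  if m % 2 = 1 then
    if x ≤ m / 2 then
      (-1) ^ x * ch ((y : ℤ) - m / 2) ((m / 2 : ℤ) - x)
    else
      (-1) ^ y * ch ((x : ℤ) - m / 2 - 1) ((y : ℤ) + x - m + 1)
  else
    (if x ≤ m / 2 then
      (-1) ^ x * (ch ((y : ℤ) - m / 2 + 1) ((m / 2 : ℤ) - x)
        + ch ((y : ℤ) - m / 2) ((m / 2 : ℤ) - 1 - x)) else 0)
    + (if m / 2 ≤ x then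
      (-1) ^ (y + 1) * (ch ((x : ℤ) - m / 2) ((y : ℤ) + x - m + 1)
        + ch ((x : ℤ) - m / 2 - 1) ((y : ℤ) + x - m + 1)) else 0)

lemma neg_one_pow_eq {x y : ℕ} (h : x % 2 = y % 2) : ((-1 : ℤ)) ^ x = (-1) ^ y := by
  rcases Nat.even_or_odd x with hx | hx
  · have hx' := Nat.even_iff.mp hx
    rw [hx.neg_one_pow, (Nat.even_iff.mpr (by omega)).neg_one_pow]
  · have hx' := Nat.odd_iff.mp hx
    rw [hx.neg_one_pow, (Nat.odd_iff.mpr (by omega)).neg_one_pow]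

lemma Fm_support {m x y : ℕ} (h : x + y + 1 < m) : Fm m x y = 0 := by
  unfold Fm
  rcases Nat.even_or_odd m with hm | hm
  · have hm2 : m % 2 = 0 := Nat.even_iff.mp hm
    rw [if_neg (show ¬ m % 2 = 1 by omega)]
    by_cases h1 : x ≤ m / 2 <;> by_cases h2 : m / 2 ≤ x
    · rw [if_pos h1, if_pos h2,
        ch_eq_zero_of_lt (show ((y:ℤ) - m / 2 + 1) < ((m / 2 : ℤ) - x) by omega),
        ch_eq_zero_of_lt (show ((y:ℤ) - m / 2) < ((m / 2 : ℤ) - 1 - x) by omega),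
        ch_eq_zero_of_neg (show ((y : ℤ) + x - m + 1) < 0 by omega),
        ch_eq_zero_of_neg (show ((y : ℤ) + x - m + 1) < 0 by omega)]
      ring
    · rw [if_pos h1, if_neg h2,
        ch_eq_zero_of_lt (show ((y:ℤ) - m / 2 + 1) < ((m / 2 : ℤ) - x) by omega),
        ch_eq_zero_of_lt (show ((y:ℤ) - m / 2) < ((m / 2 : ℤ) - 1 - x) by omega)]
      ring
    · rw [if_neg h1, if_pos h2,
        ch_eq_zero_of_neg (show ((y : ℤ) + x - m + 1) < 0 by omega),
        ch_eq_zero_of_neg (show ((y : ℤ) + x - m + 1) < 0 by omega)]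
      ring
    · omega
  · have hm2 : m % 2 = 1 := Nat.odd_iff.mp hm
    rw [if_pos hm2]
    by_cases h1 : x ≤ m / 2
    · rw [if_pos h1,
        ch_eq_zero_of_lt (show ((y:ℤ) - m / 2) < ((m / 2 : ℤ) - x) by omega)]
      ring
    · rw [if_neg h1,
        ch_eq_zero_of_neg (show ((y : ℤ) + x - m + 1) < 0 by omega)]
      ring

lemma Fm_antidiag {m x y : ℕ} (h : x + y + 1 = m) :
    Fm m x y = (-1) ^ x * (if m % 2 = 1 then 1 else 2) := by
  unfold Fm
  rcases Nat.even_or_odd m with hm | hm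
  · have hm2 : m % 2 = 0 := Nat.even_iff.mp hm
    rw [if_neg (show ¬ m % 2 = 1 by omega), if_neg (show ¬ m % 2 = 1 by omega)]
    by_cases h1 : x < m / 2
    · rw [if_pos (show x ≤ m / 2 by omega), if_neg (show ¬ m / 2 ≤ x by omega),
        (show (y : ℤ) - m / 2 + 1 = (m / 2 : ℤ) - x by omega), ch_self (by omega),
        (show (y : ℤ) - m / 2 = (m / 2 : ℤ) - 1 - x by omega), ch_self (by omega)]
      ring
    · by_cases h2 : x = m / 2
      · rw [if_pos (show x ≤ m / 2 by omega), if_pos (show m / 2 ≤ x by omega),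
          ch_eq_zero_of_neg (show ((m / 2 : ℤ) - 1 - x) < 0 by omega),
          ch_eq_zero_of_lt (show ((x:ℤ) - m / 2 - 1) < ((y:ℤ) + x - m + 1) by omega),
          (show (y : ℤ) - m / 2 + 1 = 0 by omega), (show (m / 2 : ℤ) - x = 0 by omega),
          (show (y : ℤ) + x - m + 1 = 0 by omega), (show (x : ℤ) - m / 2 = 0 by omega),
          ch_zero_right le_rfl, neg_one_pow_eq (show (y + 1) % 2 = x % 2 by omega)]
        ring
      · rw [if_neg (show ¬ x ≤ m / 2 by omega), if_pos (show m / 2 ≤ x by omega),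
          (show (y : ℤ) + x - m + 1 = 0 by omega), ch_zero_right (by omega),
          ch_zero_right (by omega), neg_one_pow_eq (show (y + 1) % 2 = x % 2 by omega)]
        ring
  · have hm2 : m % 2 = 1 := Nat.odd_iff.mp hm
    rw [if_pos hm2, if_pos hm2]
    by_cases h1 : x ≤ m / 2
    · rw [if_pos h1, (show (y : ℤ) - m / 2 = (m / 2 : ℤ) - x by omega), ch_self (by omega)]
    · rw [if_neg h1, (show (y : ℤ) + x - m + 1 = 0 by omega), ch_zero_right (by omega),
        neg_one_pow_eq (show y % 2 = x % 2 by omega)]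




lemma ch_eq_zero_of_neg_left {a b : ℤ} (h : a < 0) : ch a b = 0 := by
  simp only [ch, if_neg]; omega

lemma ch_succ {a : ℤ} (b : ℤ) (ha : 0 ≤ a) : ch (a + 1) b = ch a (b - 1) + ch a b := by
  have h := ch_pascal (a := a) (b - 1) ha
  rw [sub_add_cancel] at h
  exact h

lemma ch_reflect {a : ℤ} (b : ℤ) (ha : 0 ≤ a) : ch a (a - b + 1) = ch a (b - 1) := by
  rw [ch_symm (a - b + 1) ha]
  congr 1
  ring

lemma Fm_rec_odd {m x y : ℕ} (hm2 : m % 2 = 1) :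
    Fm m x y = Fm m x (y + 1) + (-1) ^ m * Fm m (y + 1) x := by
  have hmm : (-1 : ℤ) ^ m = -1 := (Nat.odd_iff.mpr hm2).neg_one_pow
  unfold Fm
  rw [if_pos hm2, if_pos hm2, if_pos hm2, hmm]
  push_cast
  by_cases h1 : x ≤ m / 2 <;> by_cases h2 : y + 1 ≤ m / 2
  · -- O1
    rw [if_pos h1, if_pos h1, if_pos h2]
    by_cases h3 : x = m / 2 ∧ y + 1 = m / 2
    · -- O1a
      rw [ch_eq_zero_of_lt (show ((y:ℤ) - m / 2) < ((m / 2 : ℤ) - x) by omega),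
        (show ((y:ℤ) + 1 - m / 2) = 0 by omega), (show ((m:ℤ) / 2 - x) = 0 by omega),
        (show ((x:ℤ) - m / 2) = 0 by omega), (show ((m:ℤ) / 2 - (y + 1)) = 0 by omega),
        ch_zero_right le_rfl, neg_one_pow_eq (show (y + 1) % 2 = x % 2 by omega)]
      ring
    · -- O1b
      rw [ch_eq_zero_of_lt (show ((y:ℤ) - m / 2) < ((m / 2 : ℤ) - x) by omega),
        ch_eq_zero_of_lt (show ((y:ℤ) + 1 - m / 2) < ((m / 2 : ℤ) - x) by omega),
        ch_eq_zero_of_lt (show ((x:ℤ) - m / 2) < ((m / 2 : ℤ) - (y + 1)) by omega)]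
      ring
  · -- O2
    rw [if_pos h1, if_pos h1, if_neg h2]
    have e1 : ch ((y:ℤ) + 1 - m / 2) ((m / 2 : ℤ) - x)
        = ch ((y:ℤ) - m / 2) (((m / 2 : ℤ) - x) - 1) + ch ((y:ℤ) - m / 2) ((m / 2 : ℤ) - x) := by
      rw [show ((y:ℤ) + 1 - m / 2) = ((y:ℤ) - m / 2) + 1 by ring, ch_succ _ (by omega)]
    have e2 : ch ((y:ℤ) + 1 - m / 2 - 1) ((x:ℤ) + (y + 1) - m + 1)
        = ch ((y:ℤ) - m / 2) (((m / 2 : ℤ) - x) - 1) := by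
      rw [show ((y:ℤ) + 1 - m / 2 - 1) = ((y:ℤ) - m / 2) by ring,
        show ((x:ℤ) + (y + 1) - m + 1) = ((y:ℤ) - m / 2) - ((m / 2 : ℤ) - x) + 1 by omega,
        ch_reflect _ (by omega)]
    linear_combination (-(-1 : ℤ)^x) * e1 + ((-1 : ℤ)^x) * e2
  · -- O3
    rw [if_neg h1, if_neg h1, if_pos h2]
    have e1 : ch ((x:ℤ) - m / 2) ((m / 2 : ℤ) - (y + 1))
        = ch ((x:ℤ) - m / 2 - 1) ((y:ℤ) + x - m + 1) + ch ((x:ℤ) - m / 2 - 1) (((y:ℤ) + x - m + 1) + 1) := by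
      conv_lhs => rw [show ((m:ℤ) / 2 - (y + 1)) = ((x:ℤ) - m / 2) - (((y:ℤ) + x - m + 1) + 1) by omega,
        ← ch_symm (((y:ℤ) + x - m + 1) + 1) (show (0:ℤ) ≤ (x:ℤ) - m / 2 by omega),
        show ((x:ℤ) - m / 2) = ((x:ℤ) - m / 2 - 1) + 1 by ring,
        ch_pascal _ (by omega)]
    have e2 : ch ((x:ℤ) - m / 2 - 1) ((y:ℤ) + 1 + x - m + 1)
        = ch ((x:ℤ) - m / 2 - 1) (((y:ℤ) + x - m + 1) + 1) := by
      congr 1; ring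
    linear_combination ((-1 : ℤ)^(y+1)) * e1 + ((-1 : ℤ)^y) * e2
  · -- O4
    rw [if_neg h1, if_neg h1, if_neg (show ¬ y + 1 ≤ m / 2 by omega)]
    rw [ch_eq_zero_of_lt (show ((x:ℤ) - m / 2 - 1) < ((y:ℤ) + x - m + 1) by omega),
      ch_eq_zero_of_lt (show ((x:ℤ) - m / 2 - 1) < ((y:ℤ) + 1 + x - m + 1) by omega),
      ch_eq_zero_of_lt (show ((y:ℤ) + 1 - m / 2 - 1) < ((x:ℤ) + (y + 1) - m + 1) by omega)]
    ring




lemma Fm_rec_even {m x y : ℕ} (hm2 : m % 2 = 0) :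
    Fm m x y = Fm m x (y + 1) + (-1) ^ m * Fm m (y + 1) x := by
  have hmm : (-1 : ℤ) ^ m = 1 := (Nat.even_iff.mpr hm2).neg_one_pow
  unfold Fm
  rw [if_neg (show ¬ m % 2 = 1 by omega), if_neg (show ¬ m % 2 = 1 by omega),
    if_neg (show ¬ m % 2 = 1 by omega), hmm]
  push_cast
  by_cases h1 : x < m / 2
  · -- Case I : x < h
    rw [if_pos (show x ≤ m / 2 by omega), if_pos (show x ≤ m / 2 by omega),
      if_neg (show ¬ m / 2 ≤ x by omega), if_neg (show ¬ m / 2 ≤ x by omega)]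
    rcases lt_trichotomy (y + 1) (m / 2) with h2 | h2 | h2
    · -- I.a : all terms vanish
      rw [if_pos (show y + 1 ≤ m / 2 by omega), if_neg (show ¬ m / 2 ≤ y + 1 by omega),
        ch_eq_zero_of_lt (show ((y:ℤ) - m / 2 + 1) < ((m / 2 : ℤ) - x) by omega),
        ch_eq_zero_of_lt (show ((y:ℤ) - m / 2) < ((m / 2 : ℤ) - 1 - x) by omega),
        ch_eq_zero_of_lt (show ((y:ℤ) + 1 - m / 2 + 1) < ((m / 2 : ℤ) - x) by omega),
        ch_eq_zero_of_lt (show ((y:ℤ) + 1 - m / 2) < ((m / 2 : ℤ) - 1 - x) by omega),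
        ch_eq_zero_of_lt (show ((x:ℤ) - m / 2 + 1) < ((m / 2 : ℤ) - (y + 1)) by omega),
        ch_eq_zero_of_lt (show ((x:ℤ) - m / 2) < ((m / 2 : ℤ) - 1 - (y + 1)) by omega)]
      ring
    · -- I.b : y + 1 = h
      rw [if_pos (show y + 1 ≤ m / 2 by omega), if_pos (show m / 2 ≤ y + 1 by omega)]
      by_cases h3 : x + 1 = m / 2
      · -- I.b.i : x = h - 1
        rw [ch_eq_zero_of_lt (show ((y:ℤ) - m / 2 + 1) < ((m / 2 : ℤ) - x) by omega),
          ch_eq_zero_of_lt (show ((y:ℤ) - m / 2) < ((m / 2 : ℤ) - 1 - x) by omega),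
          ch_eq_zero_of_neg (show ((m / 2 : ℤ) - 1 - (y + 1)) < 0 by omega),
          ch_eq_zero_of_neg_left (show ((y:ℤ) + 1 - m / 2 - 1) < 0 by omega),
          (show ((y:ℤ) + 1 - m / 2 + 1) = 1 by omega), (show ((m:ℤ) / 2 - x) = 1 by omega),
          ch_self (by norm_num),
          (show ((y:ℤ) + 1 - m / 2) = 0 by omega), (show ((m:ℤ) / 2 - 1 - x) = 0 by omega),
          (show ((x:ℤ) - m / 2 + 1) = 0 by omega), (show ((m:ℤ) / 2 - (y + 1)) = 0 by omega),
          (show ((x:ℤ) + (y + 1) - m + 1) = 0 by omega),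
          ch_zero_right le_rfl,
          neg_one_pow_eq (show (y + 1) % 2 = (x + 1) % 2 by omega)]
        ring
      · -- I.b.ii : x < h - 1, all zero
        rw [ch_eq_zero_of_lt (show ((y:ℤ) - m / 2 + 1) < ((m / 2 : ℤ) - x) by omega),
          ch_eq_zero_of_lt (show ((y:ℤ) - m / 2) < ((m / 2 : ℤ) - 1 - x) by omega),
          ch_eq_zero_of_lt (show ((y:ℤ) + 1 - m / 2 + 1) < ((m / 2 : ℤ) - x) by omega),
          ch_eq_zero_of_lt (show ((y:ℤ) + 1 - m / 2) < ((m / 2 : ℤ) - 1 - x) by omega),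
          ch_eq_zero_of_neg_left (show ((x:ℤ) - m / 2 + 1) < 0 by omega),
          ch_eq_zero_of_neg (show ((m / 2 : ℤ) - 1 - (y + 1)) < 0 by omega),
          ch_eq_zero_of_neg (show ((x:ℤ) + (y + 1) - m + 1) < 0 by omega),
          ch_eq_zero_of_neg (show ((x:ℤ) + (y + 1) - m + 1) < 0 by omega)]
        ring
    · -- I.c : y ≥ h, Pascal identities
      rw [if_neg (show ¬ y + 1 ≤ m / 2 by omega), if_pos (show m / 2 ≤ y + 1 by omega)]
      have e1 : ch ((y:ℤ) + 1 - m / 2 + 1) ((m / 2 : ℤ) - x)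
          = ch ((y:ℤ) - m / 2 + 1) (((m / 2 : ℤ) - x) - 1) + ch ((y:ℤ) - m / 2 + 1) ((m / 2 : ℤ) - x) := by
        rw [show ((y:ℤ) + 1 - m / 2 + 1) = ((y:ℤ) - m / 2 + 1) + 1 by ring, ch_succ _ (by omega)]
      have e2 : ch ((y:ℤ) + 1 - m / 2) ((m / 2 : ℤ) - 1 - x)
          = ch ((y:ℤ) - m / 2) (((m / 2 : ℤ) - 1 - x) - 1) + ch ((y:ℤ) - m / 2) ((m / 2 : ℤ) - 1 - x) := by
        rw [show ((y:ℤ) + 1 - m / 2) = ((y:ℤ) - m / 2) + 1 by ring, ch_succ _ (by omega)]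
      have e3 : ch ((y:ℤ) + 1 - m / 2) ((x:ℤ) + (y + 1) - m + 1)
          = ch ((y:ℤ) - m / 2 + 1) (((m / 2 : ℤ) - x) - 1) := by
        rw [show ((y:ℤ) + 1 - m / 2) = ((y:ℤ) - m / 2 + 1) by ring,
          show ((x:ℤ) + (y + 1) - m + 1) = ((y:ℤ) - m / 2 + 1) - ((m / 2 : ℤ) - x) + 1 by omega,
          ch_reflect _ (by omega)]
      have e4 : ch ((y:ℤ) + 1 - m / 2 - 1) ((x:ℤ) + (y + 1) - m + 1)
          = ch ((y:ℤ) - m / 2) (((m / 2 : ℤ) - 1 - x) - 1) := by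
        rw [show ((y:ℤ) + 1 - m / 2 - 1) = ((y:ℤ) - m / 2) by ring,
          show ((x:ℤ) + (y + 1) - m + 1) = ((y:ℤ) - m / 2) - ((m / 2 : ℤ) - 1 - x) + 1 by omega,
          ch_reflect _ (by omega)]
      linear_combination (-(-1 : ℤ)^x) * e1 + (-(-1 : ℤ)^x) * e2 + ((-1 : ℤ)^x) * e3 + ((-1 : ℤ)^x) * e4
  · by_cases h0 : x = m / 2
    · -- Case II : x = h
      rw [if_pos (show x ≤ m / 2 by omega), if_pos (show x ≤ m / 2 by omega),
        if_pos (show m / 2 ≤ x by omega), if_pos (show m / 2 ≤ x by omega)]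
      rcases (show y + 3 ≤ m / 2 ∨ y + 3 = m / 2 + 1 ∨ y + 2 = m / 2 + 1 ∨ m / 2 ≤ y by omega)
        with h2 | h2 | h2 | h2
      · -- II.1 : y ≤ h - 3
        rw [if_pos (show y + 1 ≤ m / 2 by omega), if_neg (show ¬ m / 2 ≤ y + 1 by omega),
          ch_eq_zero_of_neg_left (show ((y:ℤ) - m / 2 + 1) < 0 by omega),
          ch_eq_zero_of_neg (show ((m / 2 : ℤ) - 1 - x) < 0 by omega),
          ch_eq_zero_of_neg (show ((m / 2 : ℤ) - 1 - x) < 0 by omega),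
          ch_eq_zero_of_neg (show ((y:ℤ) + x - m + 1) < 0 by omega),
          ch_eq_zero_of_neg (show ((y:ℤ) + x - m + 1) < 0 by omega),
          ch_eq_zero_of_neg_left (show ((y:ℤ) + 1 - m / 2 + 1) < 0 by omega),
          ch_eq_zero_of_neg (show ((y:ℤ) + 1 + x - m + 1) < 0 by omega),
          ch_eq_zero_of_neg (show ((y:ℤ) + 1 + x - m + 1) < 0 by omega),
          ch_eq_zero_of_lt (show ((x:ℤ) - m / 2 + 1) < ((m / 2 : ℤ) - (y + 1)) by omega),
          ch_eq_zero_of_lt (show ((x:ℤ) - m / 2) < ((m / 2 : ℤ) - 1 - (y + 1)) by omega)]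
        ring
      · -- II.2 : y = h - 2
        rw [if_pos (show y + 1 ≤ m / 2 by omega), if_neg (show ¬ m / 2 ≤ y + 1 by omega),
          ch_eq_zero_of_neg_left (show ((y:ℤ) - m / 2 + 1) < 0 by omega),
          ch_eq_zero_of_neg (show ((m / 2 : ℤ) - 1 - x) < 0 by omega),
          ch_eq_zero_of_neg (show ((m / 2 : ℤ) - 1 - x) < 0 by omega),
          ch_eq_zero_of_neg (show ((y:ℤ) + x - m + 1) < 0 by omega),
          ch_eq_zero_of_neg (show ((y:ℤ) + x - m + 1) < 0 by omega),
          ch_eq_zero_of_neg_left (show ((x:ℤ) - m / 2 - 1) < 0 by omega),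
          (show ((x:ℤ) - m / 2 + 1) = 1 by omega), (show ((m:ℤ) / 2 - (y + 1)) = 1 by omega),
          ch_self (by norm_num : (0:ℤ) ≤ 1),
          (show ((y:ℤ) + 1 - m / 2 + 1) = 0 by omega), (show ((m:ℤ) / 2 - x) = 0 by omega),
          (show ((y:ℤ) + 1 + x - m + 1) = 0 by omega), (show ((x:ℤ) - m / 2) = 0 by omega),
          (show ((m:ℤ) / 2 - 1 - (y + 1)) = 0 by omega),
          ch_zero_right le_rfl,
          neg_one_pow_eq (show (y + 1 + 1) % 2 = x % 2 by omega),
          neg_one_pow_eq (show (y + 1) % 2 = (x + 1) % 2 by omega)]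
        ring
      · -- II.3 : y = h - 1
        rw [if_pos (show y + 1 ≤ m / 2 by omega), if_pos (show m / 2 ≤ y + 1 by omega),
          ch_eq_zero_of_neg (show ((m / 2 : ℤ) - 1 - x) < 0 by omega),
          ch_eq_zero_of_neg (show ((m / 2 : ℤ) - 1 - x) < 0 by omega),
          ch_eq_zero_of_neg_left (show ((x:ℤ) - m / 2 - 1) < 0 by omega),
          ch_eq_zero_of_neg_left (show ((x:ℤ) - m / 2 - 1) < 0 by omega),
          ch_eq_zero_of_neg_left (show ((y:ℤ) + 1 - m / 2 - 1) < 0 by omega),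
          ch_eq_zero_of_lt (show ((y:ℤ) + 1 - m / 2) < ((x:ℤ) + (y + 1) - m + 1) by omega),
          ch_eq_zero_of_lt (show ((x:ℤ) - m / 2) < ((y:ℤ) + 1 + x - m + 1) by omega),
          ch_eq_zero_of_neg (show ((m / 2 : ℤ) - 1 - (y + 1)) < 0 by omega),
          (show ((y:ℤ) + 1 - m / 2 + 1) = 1 by omega),
          (show ((x:ℤ) - m / 2 + 1) = 1 by omega), (show ((m:ℤ) / 2 - (y + 1)) = 0 by omega),
          (show ((y:ℤ) - m / 2 + 1) = 0 by omega), (show ((m:ℤ) / 2 - x) = 0 by omega),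
          (show ((y:ℤ) + x - m + 1) = 0 by omega), (show ((x:ℤ) - m / 2) = 0 by omega),
          ch_zero_right le_rfl,
          ch_zero_right (by norm_num : (0:ℤ) ≤ 1)]
        ring
      · -- II.4 : y ≥ h
        rw [if_neg (show ¬ y + 1 ≤ m / 2 by omega), if_pos (show m / 2 ≤ y + 1 by omega),
          ch_eq_zero_of_neg (show ((m / 2 : ℤ) - 1 - x) < 0 by omega),
          ch_eq_zero_of_neg (show ((m / 2 : ℤ) - 1 - x) < 0 by omega),
          ch_eq_zero_of_neg_left (show ((x:ℤ) - m / 2 - 1) < 0 by omega),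
          ch_eq_zero_of_neg_left (show ((x:ℤ) - m / 2 - 1) < 0 by omega),
          ch_eq_zero_of_lt (show ((y:ℤ) + 1 - m / 2) < ((x:ℤ) + (y + 1) - m + 1) by omega),
          ch_eq_zero_of_lt (show ((y:ℤ) + 1 - m / 2 - 1) < ((x:ℤ) + (y + 1) - m + 1) by omega),
          (show ((m:ℤ) / 2 - x) = 0 by omega), ch_zero_right (by omega),
          ch_zero_right (by omega),
          (show ((x:ℤ) - m / 2) = 0 by omega),
          ch_eq_zero_of_lt (show (0:ℤ) < ((y:ℤ) + x - m + 1) by omega),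
          ch_eq_zero_of_lt (show (0:ℤ) < ((y:ℤ) + 1 + x - m + 1) by omega)]
        ring
    · -- Case III : x > h
      have h1' : m / 2 < x := by omega
      rw [if_neg (show ¬ x ≤ m / 2 by omega), if_neg (show ¬ x ≤ m / 2 by omega),
        if_pos (show m / 2 ≤ x by omega), if_pos (show m / 2 ≤ x by omega)]
      rcases lt_trichotomy (y + 1) (m / 2) with h2 | h2 | h2
      · -- III.a : Pascal identities
        rw [if_pos (show y + 1 ≤ m / 2 by omega), if_neg (show ¬ m / 2 ≤ y + 1 by omega)]
        have e0 : ch ((x:ℤ) - m / 2) ((y:ℤ) + 1 + x - m + 1)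
            = ch ((x:ℤ) - m / 2) (((y:ℤ) + x - m + 1) + 1) := by congr 1; ring
        have e0' : ch ((x:ℤ) - m / 2 - 1) ((y:ℤ) + 1 + x - m + 1)
            = ch ((x:ℤ) - m / 2 - 1) (((y:ℤ) + x - m + 1) + 1) := by congr 1; ring
        have e1 : ch ((x:ℤ) - m / 2 + 1) ((m / 2 : ℤ) - (y + 1))
            = ch ((x:ℤ) - m / 2) ((y:ℤ) + x - m + 1) + ch ((x:ℤ) - m / 2) (((y:ℤ) + x - m + 1) + 1) := by
          conv_lhs => rw [show ((m:ℤ) / 2 - (y + 1)) = ((x:ℤ) - m / 2 + 1) - (((y:ℤ) + x - m + 1) + 1) by omega,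
            ← ch_symm (((y:ℤ) + x - m + 1) + 1) (show (0:ℤ) ≤ (x:ℤ) - m / 2 + 1 by omega),
            ch_pascal _ (show (0:ℤ) ≤ (x:ℤ) - m / 2 by omega)]
        have e2 : ch ((x:ℤ) - m / 2) ((m / 2 : ℤ) - 1 - (y + 1))
            = ch ((x:ℤ) - m / 2 - 1) ((y:ℤ) + x - m + 1) + ch ((x:ℤ) - m / 2 - 1) (((y:ℤ) + x - m + 1) + 1) := by
          conv_lhs => rw [show ((m:ℤ) / 2 - 1 - (y + 1)) = ((x:ℤ) - m / 2) - (((y:ℤ) + x - m + 1) + 1) by omega,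
            ← ch_symm (((y:ℤ) + x - m + 1) + 1) (show (0:ℤ) ≤ (x:ℤ) - m / 2 by omega),
            show ((x:ℤ) - m / 2) = ((x:ℤ) - m / 2 - 1) + 1 by ring,
            ch_pascal _ (show (0:ℤ) ≤ (x:ℤ) - m / 2 - 1 by omega)]
        linear_combination ((-1 : ℤ)^(y+1)) * e0 + ((-1 : ℤ)^(y+1)) * e0'
          + (-(-1 : ℤ)^(y+1)) * e1 + (-(-1 : ℤ)^(y+1)) * e2
      · -- III.b : y + 1 = h
        rw [if_pos (show y + 1 ≤ m / 2 by omega), if_pos (show m / 2 ≤ y + 1 by omega),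
          ch_eq_zero_of_lt (show ((x:ℤ) - m / 2) < ((y:ℤ) + 1 + x - m + 1) by omega),
          ch_eq_zero_of_lt (show ((x:ℤ) - m / 2 - 1) < ((y:ℤ) + 1 + x - m + 1) by omega),
          ch_eq_zero_of_lt (show ((y:ℤ) + 1 - m / 2) < ((x:ℤ) + (y + 1) - m + 1) by omega),
          ch_eq_zero_of_neg_left (show ((y:ℤ) + 1 - m / 2 - 1) < 0 by omega),
          ch_eq_zero_of_neg (show ((m / 2 : ℤ) - 1 - (y + 1)) < 0 by omega),
          (show ((y:ℤ) + x - m + 1) = ((x:ℤ) - m / 2) by omega),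
          ch_self (show (0:ℤ) ≤ (x:ℤ) - m / 2 by omega),
          ch_eq_zero_of_lt (show ((x:ℤ) - m / 2 - 1) < ((x:ℤ) - m / 2) by omega),
          (show ((m:ℤ) / 2 - (y + 1)) = 0 by omega),
          ch_zero_right (show (0:ℤ) ≤ (x:ℤ) - m / 2 + 1 by omega)]
        ring
      · -- III.c : all zero
        rw [if_neg (show ¬ y + 1 ≤ m / 2 by omega), if_pos (show m / 2 ≤ y + 1 by omega),
          ch_eq_zero_of_lt (show ((x:ℤ) - m / 2) < ((y:ℤ) + x - m + 1) by omega),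
          ch_eq_zero_of_lt (show ((x:ℤ) - m / 2 - 1) < ((y:ℤ) + x - m + 1) by omega),
          ch_eq_zero_of_lt (show ((x:ℤ) - m / 2) < ((y:ℤ) + 1 + x - m + 1) by omega),
          ch_eq_zero_of_lt (show ((x:ℤ) - m / 2 - 1) < ((y:ℤ) + 1 + x - m + 1) by omega),
          ch_eq_zero_of_lt (show ((y:ℤ) + 1 - m / 2) < ((x:ℤ) + (y + 1) - m + 1) by omega),
          ch_eq_zero_of_lt (show ((y:ℤ) + 1 - m / 2 - 1) < ((x:ℤ) + (y + 1) - m + 1) by omega)]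
        ring


lemma Fm_rec (m x y : ℕ) :
    Fm m x y = Fm m x (y + 1) + (-1) ^ m * Fm m (y + 1) x := by
  rcases Nat.even_or_odd m with hm | hm
  · exact Fm_rec_even (Nat.even_iff.mp hm)
  · exact Fm_rec_odd (Nat.odd_iff.mp hm)

lemma Fm_rel {m x y : ℕ} (hx : x < m) (hy : y < m) :
    Fm m x y = -(-1 : ℤ) ^ m * (Fm m y x - (if x = 0 then 0 else Fm m y (x - 1))) := by
  have hsq : (-1 : ℤ) ^ m * (-1) ^ m = 1 := by rw [← mul_pow]; norm_num
  rcases x with _ | x'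
  · rw [if_pos rfl, sub_zero]
    by_cases hym : y + 1 = m
    · rw [Fm_antidiag (by omega), Fm_antidiag (by omega),
        (by norm_num : ((-1:ℤ)) ^ (0:ℕ) = 1)]
      rcases Nat.even_or_odd m with hm | hm
      · have hme : m % 2 = 0 := Nat.even_iff.mp hm
        rw [hm.neg_one_pow, neg_one_pow_eq (show y % 2 = 1 % 2 by omega)]
        ring
      · have hme : m % 2 = 1 := Nat.odd_iff.mp hm
        rw [hm.neg_one_pow, neg_one_pow_eq (show y % 2 = 0 % 2 by omega)]
        ring
    · rw [Fm_support (by omega), Fm_support (by omega)]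
      ring
  · rw [if_neg (by omega)]
    have h := Fm_rec m y x'
    have hx1 : x' + 1 - 1 = x' := by omega
    rw [hx1]
    have : (-1 : ℤ) ^ m * Fm m (x' + 1) y = Fm m y x' - Fm m y (x' + 1) := by
      linarith [h]
    calc Fm m (x' + 1) y = ((-1 : ℤ) ^ m * (-1) ^ m) * Fm m (x' + 1) y := by rw [hsq]; ring
    _ = (-1 : ℤ) ^ m * (Fm m y x' - Fm m y (x' + 1)) := by rw [mul_assoc, this]
    _ = -(-1 : ℤ) ^ m * (Fm m y (x' + 1) - Fm m y x') := by ring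


section Form
variable (k : Type*) [Field k] (m : ℕ)

def pk (i j : ℕ) : k := ((Fm m i j : ℤ) : k)
def epsk : k := (-1 : k) ^ m
def sm : k := if m % 2 = 1 then 0 else 1
def amk : k := if m % 2 = 1 then 1 else 2
def xN (v : AmbA k m) : ℕ → k := fun i => if h : i < m + 1 then v.1 ⟨i, h⟩ else 0
def yN (v : AmbA k m) : ℕ → k := fun i => if h : i < m then v.2.1 ⟨i, h⟩ else 0
def zN (v : AmbA k m) : ℕ → k := fun i => if h : i < m then v.2.2 ⟨i, h⟩ else 0
def bN (v : AmbA k m) : ℕ → k := fun i => xN k m v i + yN k m v i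
def cN (v : AmbA k m) : ℕ → k := fun i => xN k m v i + yN k m v i + zN k m v i
def Phi (u w : ℕ → k) : k :=
  ∑ i ∈ Finset.range m, ∑ j ∈ Finset.range m, pk k m i j * u i * w j
def Lf (u : ℕ → k) : k := ∑ i ∈ Finset.range m, pk k m i (m - 1) * u i
def Bf (v w : AmbA k m) : k :=
  Phi k m (xN k m v) (fun j => - zN k m w j)
  + Phi k m (bN k m v) (cN k m w)
  + epsk k m * Phi k m (xN k m w) (fun j => - zN k m v j)
  + epsk k m * Phi k m (bN k m w) (cN k m v)
  + Lf k m (bN k m v) * xN k m w m + epsk k m * Lf k m (bN k m w) * xN k m v m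
  + sm k m * xN k m v m * xN k m w m

/-- delta function -/
def dl (j : Fin m) : ℕ → k := fun i => if i = (j : ℕ) then 1 else 0

variable {k m}

/-- basic facts about `pk` -/
lemma pk_support {i j : ℕ} (h : i + j + 1 < m) : pk k m i j = 0 := by
  rw [pk, Fm_support h, Int.cast_zero]

lemma pk_antidiag {i j : ℕ} (h : i + j + 1 = m) : pk k m i j = (-1 : k) ^ i * amk k m := by
  rw [pk, Fm_antidiag h, amk]
  push_cast
  split <;> norm_num

lemma pk_rel {i j : ℕ} (hi : i < m) (hj : j < m) :
    pk k m i j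
      = - epsk k m * (pk k m j i - (if i = 0 then 0 else pk k m j (i - 1))) := by
  rw [pk, Fm_rel hi hj, pk, pk, epsk]
  push_cast
  split <;> simp

lemma amk_ne (h2 : (2 : k) ≠ 0) : amk k m ≠ 0 := by
  rw [amk]; split
  · exact one_ne_zero
  · exact h2

lemma epsk_ne : epsk k m ≠ 0 := by
  rw [epsk]
  exact pow_ne_zero _ (by norm_num)

lemma sum_dl_mul (f : ℕ → k) (j : Fin m) :
    ∑ i ∈ Finset.range m, f i * dl k m j i = f (j : ℕ) := by
  rw [Finset.sum_eq_single (j : ℕ)]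
  · rw [dl, if_pos rfl, mul_one]
  · intro b _ hb; rw [dl, if_neg hb, mul_zero]
  · intro h; exact absurd (Finset.mem_range.mpr j.isLt) h

lemma sum_mul_dl (f : ℕ → k) (j : Fin m) :
    ∑ i ∈ Finset.range m, dl k m j i * f i = f (j : ℕ) := by
  rw [Finset.sum_eq_single (j : ℕ)]
  · rw [dl, if_pos rfl, one_mul]
  · intro b _ hb; rw [dl, if_neg hb, zero_mul]
  · intro h; exact absurd (Finset.mem_range.mpr j.isLt) h

lemma Phi_dl_right (u : ℕ → k) (j : Fin m) :
    Phi k m u (dl k m j) = ∑ i ∈ Finset.range m, pk k m i (j : ℕ) * u i := by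
  rw [Phi]
  refine Finset.sum_congr rfl fun i _ => ?_
  exact sum_dl_mul (fun t => pk k m i t * u i) j

lemma Phi_dl_left (w : ℕ → k) (j : Fin m) :
    Phi k m (dl k m j) w = ∑ i ∈ Finset.range m, pk k m (j : ℕ) i * w i := by
  rw [Phi]
  have h1 : ∀ i ∈ Finset.range m,
      ∑ j' ∈ Finset.range m, pk k m i j' * dl k m j i * w j'
        = dl k m j i * ∑ j' ∈ Finset.range m, pk k m i j' * w j' := by
    intro i _
    rw [Finset.mul_sum]
    exact Finset.sum_congr rfl fun j' _ => by ring
  rw [Finset.sum_congr rfl h1]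
  exact sum_mul_dl (fun i => ∑ j' ∈ Finset.range m, pk k m i j' * w j') j

lemma Phi_zero_right {u w : ℕ → k} (h : ∀ j, j < m → w j = 0) : Phi k m u w = 0 := by
  rw [Phi]
  refine Finset.sum_eq_zero fun i _ => Finset.sum_eq_zero fun j hj => ?_
  rw [h j (Finset.mem_range.mp hj), mul_zero]

lemma Phi_zero_left {u w : ℕ → k} (h : ∀ i, i < m → u i = 0) : Phi k m u w = 0 := by
  rw [Phi]
  refine Finset.sum_eq_zero fun i hi => Finset.sum_eq_zero fun j _ => ?_
  rw [h i (Finset.mem_range.mp hi), mul_zero, zero_mul]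

lemma Lf_zero {u : ℕ → k} (h : ∀ i, i < m → u i = 0) : Lf k m u = 0 := by
  rw [Lf]
  exact Finset.sum_eq_zero fun i hi => by rw [h i (Finset.mem_range.mp hi), mul_zero]

lemma Lf_dl (j : Fin m) : Lf k m (dl k m j) = pk k m (j : ℕ) (m - 1) := by
  rw [Lf]
  exact sum_dl_mul (fun i => pk k m i (m - 1)) j

lemma Phi_add_left {u u1 u2 w : ℕ → k} (h : ∀ i, u i = u1 i + u2 i) :
    Phi k m u w = Phi k m u1 w + Phi k m u2 w := by
  rw [Phi, Phi, Phi, ← Finset.sum_add_distrib]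
  refine Finset.sum_congr rfl fun i _ => ?_
  rw [← Finset.sum_add_distrib]
  refine Finset.sum_congr rfl fun j _ => ?_
  rw [h i]; ring

lemma Phi_add_right {u w w1 w2 : ℕ → k} (h : ∀ j, w j = w1 j + w2 j) :
    Phi k m u w = Phi k m u w1 + Phi k m u w2 := by
  rw [Phi, Phi, Phi, ← Finset.sum_add_distrib]
  refine Finset.sum_congr rfl fun i _ => ?_
  rw [← Finset.sum_add_distrib]
  refine Finset.sum_congr rfl fun j _ => ?_
  rw [h j]; ring

lemma Phi_smul_left {a : k} {u u1 w : ℕ → k} (h : ∀ i, u i = a * u1 i) :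
    Phi k m u w = a * Phi k m u1 w := by
  rw [Phi, Phi, Finset.mul_sum]
  refine Finset.sum_congr rfl fun i _ => ?_
  rw [Finset.mul_sum]
  refine Finset.sum_congr rfl fun j _ => ?_
  rw [h i]; ring

lemma Phi_smul_right {a : k} {u w w1 : ℕ → k} (h : ∀ j, w j = a * w1 j) :
    Phi k m u w = a * Phi k m u w1 := by
  rw [Phi, Phi, Finset.mul_sum]
  refine Finset.sum_congr rfl fun i _ => ?_
  rw [Finset.mul_sum]
  refine Finset.sum_congr rfl fun j _ => ?_
  rw [h j]; ring

lemma Lf_add {u u1 u2 : ℕ → k} (h : ∀ i, u i = u1 i + u2 i) :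
    Lf k m u = Lf k m u1 + Lf k m u2 := by
  rw [Lf, Lf, Lf, ← Finset.sum_add_distrib]
  refine Finset.sum_congr rfl fun i _ => ?_
  rw [h i]; ring

lemma Lf_smul {a : k} {u u1 : ℕ → k} (h : ∀ i, u i = a * u1 i) :
    Lf k m u = a * Lf k m u1 := by
  rw [Lf, Lf, Finset.mul_sum]
  refine Finset.sum_congr rfl fun i _ => ?_
  rw [h i]; ring

lemma xN_add (v1 v2 : AmbA k m) (i : ℕ) : xN k m (v1 + v2) i = xN k m v1 i + xN k m v2 i := by
  unfold xN; split <;> simp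

lemma yN_add (v1 v2 : AmbA k m) (i : ℕ) : yN k m (v1 + v2) i = yN k m v1 i + yN k m v2 i := by
  unfold yN; split <;> simp

lemma zN_add (v1 v2 : AmbA k m) (i : ℕ) : zN k m (v1 + v2) i = zN k m v1 i + zN k m v2 i := by
  unfold zN; split <;> simp

lemma xN_smul (a : k) (v : AmbA k m) (i : ℕ) : xN k m (a • v) i = a * xN k m v i := by
  unfold xN; split <;> simp

lemma yN_smul (a : k) (v : AmbA k m) (i : ℕ) : yN k m (a • v) i = a * yN k m v i := by
  unfold yN; split <;> simp

lemma zN_smul (a : k) (v : AmbA k m) (i : ℕ) : zN k m (a • v) i = a * zN k m v i := by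
  unfold zN; split <;> simp

lemma bN_add (v1 v2 : AmbA k m) (i : ℕ) : bN k m (v1 + v2) i = bN k m v1 i + bN k m v2 i := by
  unfold bN; rw [xN_add, yN_add]; ring

lemma cN_add (v1 v2 : AmbA k m) (i : ℕ) : cN k m (v1 + v2) i = cN k m v1 i + cN k m v2 i := by
  unfold cN; rw [xN_add, yN_add, zN_add]; ring

lemma bN_smul (a : k) (v : AmbA k m) (i : ℕ) : bN k m (a • v) i = a * bN k m v i := by
  unfold bN; rw [xN_smul, yN_smul]; ring

lemma cN_smul (a : k) (v : AmbA k m) (i : ℕ) : cN k m (a • v) i = a * cN k m v i := by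
  unfold cN; rw [xN_smul, yN_smul, zN_smul]; ring

variable (k m)

/-- The bilinear form. -/
def BB : LinearMap.BilinForm k (AmbA k m) :=
  LinearMap.mk₂ k (Bf k m)
    (fun v1 v2 w => by
      unfold Bf
      rw [Phi_add_left (w := fun j => - zN k m w j) (xN_add v1 v2),
        Phi_add_left (w := cN k m w) (bN_add v1 v2),
        Phi_add_right (u := xN k m w) (w1 := fun j => - zN k m v1 j)
          (w2 := fun j => - zN k m v2 j) (fun j => by rw [zN_add]; ring),
        Phi_add_right (u := bN k m w) (cN_add v1 v2),
        Lf_add (bN_add v1 v2), xN_add v1 v2]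
      ring
    )
    (fun a v w => by
      unfold Bf
      rw [Phi_smul_left (w := fun j => - zN k m w j) (xN_smul a v),
        Phi_smul_left (w := cN k m w) (bN_smul a v),
        Phi_smul_right (u := xN k m w) (w1 := fun j => - zN k m v j)
          (fun j => by rw [zN_smul]; ring),
        Phi_smul_right (u := bN k m w) (cN_smul a v),
        Lf_smul (bN_smul a v), xN_smul a v, smul_eq_mul]
      ring
    )
    (fun v w1 w2 => by
      unfold Bf
      rw [Phi_add_right (u := xN k m v) (w1 := fun j => - zN k m w1 j)
          (w2 := fun j => - zN k m w2 j) (fun j => by rw [zN_add]; ring),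
        Phi_add_right (u := bN k m v) (cN_add w1 w2),
        Phi_add_left (w := fun j => - zN k m v j) (xN_add w1 w2),
        Phi_add_left (w := cN k m v) (bN_add w1 w2),
        Lf_add (bN_add w1 w2), xN_add w1 w2]
      ring
    )
    (fun a w v => by
      unfold Bf
      rw [Phi_smul_right (u := xN k m w) (w1 := fun j => - zN k m v j)
          (fun j => by rw [zN_smul]; ring),
        Phi_smul_right (u := bN k m w) (cN_smul a v),
        Phi_smul_left (w := fun j => - zN k m w j) (xN_smul a v),
        Phi_smul_left (w := cN k m w) (bN_smul a v),
        Lf_smul (bN_smul a v), xN_smul a v, smul_eq_mul]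
      ring
    )

lemma BB_apply (v w : AmbA k m) : BB k m v w = Bf k m v w := rfl

lemma epsk_sq : epsk k m * epsk k m = 1 := by
  rw [epsk, ← mul_pow]; norm_num

lemma epsk_sm : epsk k m * sm k m = sm k m := by
  rw [epsk, sm]
  rcases Nat.even_or_odd m with hm | hm
  · have hm' := Nat.even_iff.mp hm
    rw [if_neg (by omega : ¬ m % 2 = 1), hm.neg_one_pow]; ring
  · rw [if_pos (Nat.odd_iff.mp hm)]; ring

lemma BB_symm (v w : AmbA k m) : BB k m w v = epsk k m * BB k m v w := by
  rw [BB_apply, BB_apply]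
  unfold Bf
  linear_combination
    (- (Phi k m (xN k m w) (fun j => - zN k m v j) + Phi k m (bN k m w) (cN k m v)
      + Lf k m (bN k m w) * xN k m v m)) * (epsk_sq k m)
    + (- (xN k m v m * xN k m w m)) * (epsk_sm k m)


end Form

section Gens
variable (k : Type*) [Field k] (m : ℕ)

def uvv (j : Fin m) : AmbA k m := ev k m j.castSucc - fv k m j
def wvv (j : Fin m) : AmbA k m := fv k m j - gv k m j

variable {k m}

lemma xN_gv (j : Fin m) (i : ℕ) : xN k m (gv k m j) i = 0 := by
  unfold xN gv; split <;> simp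

lemma yN_gv (j : Fin m) (i : ℕ) : yN k m (gv k m j) i = 0 := by
  unfold yN gv; split <;> simp

lemma zN_gv (j : Fin m) (i : ℕ) : zN k m (gv k m j) i = dl k m j i := by
  unfold zN gv dl
  split
  · simp [Pi.single_apply, Fin.ext_iff]
  · rw [if_neg (by have := j.isLt; omega)]

lemma xN_uvv (j : Fin m) (i : ℕ) : xN k m (uvv k m j) i = dl k m j i := by
  unfold xN uvv ev fv dl
  split
  · simp [Pi.single_apply, Fin.ext_iff, Fin.castSucc]
  · rw [if_neg (by have := j.isLt; omega)]

lemma yN_uvv (j : Fin m) (i : ℕ) : yN k m (uvv k m j) i = - dl k m j i := by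
  unfold yN uvv ev fv dl
  split
  · simp [Pi.single_apply, Fin.ext_iff]
  · rw [if_neg (by have := j.isLt; omega)]; ring

lemma zN_uvv (j : Fin m) (i : ℕ) : zN k m (uvv k m j) i = 0 := by
  unfold zN uvv ev fv; split <;> simp

lemma xN_wvv (j : Fin m) (i : ℕ) : xN k m (wvv k m j) i = 0 := by
  unfold xN wvv fv gv; split <;> simp

lemma yN_wvv (j : Fin m) (i : ℕ) : yN k m (wvv k m j) i = dl k m j i := by
  unfold yN wvv fv gv dl
  split
  · simp [Pi.single_apply, Fin.ext_iff]
  · rw [if_neg (by have := j.isLt; omega)]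

lemma zN_wvv (j : Fin m) (i : ℕ) : zN k m (wvv k m j) i = - dl k m j i := by
  unfold zN wvv fv gv dl
  split
  · simp [Pi.single_apply, Fin.ext_iff]
  · rw [if_neg (by have := j.isLt; omega)]; ring

lemma xN_evl (i : ℕ) : xN k m (ev k m (Fin.last m)) i = if i = m then 1 else 0 := by
  unfold xN ev
  split
  · simp [Pi.single_apply, Fin.ext_iff, Fin.last]
  · rw [if_neg (by omega)]

lemma yN_evl (i : ℕ) : yN k m (ev k m (Fin.last m)) i = 0 := by
  unfold yN ev; split <;> simp

lemma zN_evl (i : ℕ) : zN k m (ev k m (Fin.last m)) i = 0 := by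
  unfold zN ev; split <;> simp

lemma Phi_congr_right {u w w' : ℕ → k} (h : ∀ j, j < m → w j = w' j) :
    Phi k m u w = Phi k m u w' := by
  rw [Phi, Phi]
  refine Finset.sum_congr rfl fun i _ => Finset.sum_congr rfl fun j hj => ?_
  rw [h j (Finset.mem_range.mp hj)]

lemma Phi_congr_left {u u' w : ℕ → k} (h : ∀ i, i < m → u i = u' i) :
    Phi k m u w = Phi k m u' w := by
  rw [Phi, Phi]
  refine Finset.sum_congr rfl fun i hi => Finset.sum_congr rfl fun j _ => ?_
  rw [h i (Finset.mem_range.mp hi)]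

lemma Phi_smul_right' {a : k} {u w w1 : ℕ → k} (h : ∀ j, w j = a * w1 j) :
    Phi k m u w = a * Phi k m u w1 := by
  rw [Phi, Phi, Finset.mul_sum]
  refine Finset.sum_congr rfl fun i _ => ?_
  rw [Finset.mul_sum]
  refine Finset.sum_congr rfl fun j _ => ?_
  rw [h j]; ring

lemma Lf_congr {u u' : ℕ → k} (h : ∀ i, i < m → u i = u' i) : Lf k m u = Lf k m u' := by
  rw [Lf, Lf]
  exact Finset.sum_congr rfl fun i hi => by rw [h i (Finset.mem_range.mp hi)]

lemma dl_at_m (j : Fin m) : dl k m j m = 0 := by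
  rw [dl, if_neg (by have := j.isLt; omega)]

/-- evaluation at `u_j = e_j - f_j` -/
lemma eval_u (v : AmbA k m) (j : Fin m) :
    Bf k m v (uvv k m j)
      = - (epsk k m * ∑ i ∈ Finset.range m, pk k m (j : ℕ) i * zN k m v i) := by
  unfold Bf
  rw [Phi_zero_right (u := xN k m v) (fun t ht => by rw [zN_uvv]; ring),
    Phi_zero_right (u := bN k m v) (fun t ht => by
      unfold cN; rw [zN_uvv, xN_uvv, yN_uvv]; ring),
    Phi_congr_left (u := xN k m (uvv k m j)) (u' := dl k m j) (fun t ht => xN_uvv j t),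
    Phi_dl_left,
    Phi_zero_left (u := bN k m (uvv k m j)) (w := cN k m v)
      (fun t ht => by unfold bN; rw [xN_uvv, yN_uvv]; ring),
    Lf_zero (u := bN k m (uvv k m j)) (fun t ht => by unfold bN; rw [xN_uvv, yN_uvv]; ring),
    xN_uvv j m, dl_at_m,
    show (∑ i ∈ Finset.range m, pk k m (j : ℕ) i * (- zN k m v i))
        = - ∑ i ∈ Finset.range m, pk k m (j : ℕ) i * zN k m v i by
      rw [← Finset.sum_neg_distrib]
      exact Finset.sum_congr rfl fun i _ => by ring]
  ring

/-- evaluation at `g_j` -/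
lemma eval_g (v : AmbA k m) (j : Fin m) :
    Bf k m v (gv k m j) = ∑ i ∈ Finset.range m, pk k m i (j : ℕ) * yN k m v i := by
  unfold Bf
  rw [Phi_congr_right (w' := fun t => (-1) * dl k m j t) (fun t ht => by rw [zN_gv]; ring),
    Phi_smul_right' (w1 := dl k m j) (fun t => rfl), Phi_dl_right,
    Phi_congr_right (u := bN k m v) (w' := dl k m j) (fun t ht => by
      unfold cN; rw [xN_gv, yN_gv, zN_gv]; ring),
    Phi_dl_right,
    Phi_zero_left (u := xN k m (gv k m j)) (fun t ht => xN_gv j t),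
    Phi_zero_left (u := bN k m (gv k m j)) (w := cN k m v)
      (fun t ht => by unfold bN; rw [xN_gv, yN_gv]; ring),
    Lf_zero (u := bN k m (gv k m j)) (fun t ht => by unfold bN; rw [xN_gv, yN_gv]; ring),
    xN_gv j m,
    show (∑ i ∈ Finset.range m, pk k m i (j : ℕ) * bN k m v i)
        = (∑ i ∈ Finset.range m, pk k m i (j : ℕ) * xN k m v i)
          + ∑ i ∈ Finset.range m, pk k m i (j : ℕ) * yN k m v i by
      rw [← Finset.sum_add_distrib]
      exact Finset.sum_congr rfl fun i _ => by unfold bN; ring]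
  ring

/-- evaluation at `w_j = f_j - g_j` -/
lemma eval_w (v : AmbA k m) (j : Fin m) :
    Bf k m v (wvv k m j)
      = (∑ i ∈ Finset.range m, pk k m i (j : ℕ) * xN k m v i)
        + epsk k m * (∑ i ∈ Finset.range m, pk k m (j : ℕ) i * cN k m v i)
        + epsk k m * pk k m (j : ℕ) (m - 1) * xN k m v m := by
  unfold Bf
  rw [Phi_congr_right (u := xN k m v) (w' := dl k m j) (fun t ht => by rw [zN_wvv]; ring),
    Phi_dl_right,
    Phi_zero_right (u := bN k m v) (fun t ht => by
      unfold cN; rw [xN_wvv, yN_wvv, zN_wvv]; ring),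
    Phi_zero_left (u := xN k m (wvv k m j)) (fun t ht => xN_wvv j t),
    Phi_congr_left (u := bN k m (wvv k m j)) (u' := dl k m j) (w := cN k m v) (fun t ht => by
      unfold bN; rw [xN_wvv, yN_wvv]; ring),
    Phi_dl_left,
    Lf_congr (u := bN k m (wvv k m j)) (u' := dl k m j)
      (fun t ht => by unfold bN; rw [xN_wvv, yN_wvv]; ring),
    Lf_dl, xN_wvv j m]
  ring

/-- evaluation at `e_last` -/
lemma eval_e (v : AmbA k m) :
    Bf k m v (ev k m (Fin.last m))
      = (∑ i ∈ Finset.range m, pk k m i (m - 1) * bN k m v i) + sm k m * xN k m v m := by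
  unfold Bf
  rw [Phi_zero_right (u := xN k m v) (fun t ht => by rw [zN_evl]; ring),
    Phi_zero_right (u := bN k m v) (fun t ht => by
      unfold cN; rw [xN_evl, yN_evl, zN_evl, if_neg (by omega : ¬ t = m)]; ring),
    Phi_zero_left (u := xN k m (ev k m (Fin.last m)))
      (fun t ht => by rw [xN_evl, if_neg (by omega : ¬ t = m)]),
    Phi_zero_left (u := bN k m (ev k m (Fin.last m))) (w := cN k m v) (fun t ht => by
      unfold bN; rw [xN_evl, yN_evl, if_neg (by omega : ¬ t = m)]; ring),
    Lf_zero (u := bN k m (ev k m (Fin.last m))) (fun t ht => by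
      unfold bN; rw [xN_evl, yN_evl, if_neg (by omega : ¬ t = m)]; ring),
    xN_evl m, if_pos rfl, Lf]
  ring

end Gens

section Inj
variable {k : Type*} [Field k] {m : ℕ}

lemma shift_sum (g : ℕ → k) :
    (∑ i ∈ Finset.range m, if i = 0 then 0 else g (i - 1))
      = (∑ i ∈ Finset.range m, g i) - (if m = 0 then 0 else g (m - 1)) := by
  rcases m with _ | n
  · simp
  · rw [Finset.sum_range_succ' (fun i => if i = 0 then (0:k) else g (i - 1)) n,
      Finset.sum_range_succ g n, if_neg (Nat.succ_ne_zero n)]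
    simp

lemma key_shift (w : ℕ → k) (j : Fin m) :
    ∑ i ∈ Finset.range m, pk k m i (j : ℕ) * w i
      = - epsk k m * ((∑ i ∈ Finset.range m, pk k m (j : ℕ) i * (w i - w (i + 1)))
          + pk k m (j : ℕ) (m - 1) * w m) := by
  have hm : 0 < m := j.pos
  have hjm := j.isLt
  have h1 : ∀ i ∈ Finset.range m, pk k m i (j : ℕ) * w i
      = (- epsk k m * pk k m (j : ℕ) i * w i)
        + epsk k m * (if i = 0 then 0 else pk k m (j : ℕ) (i - 1) * w ((i - 1) + 1)) := by
    intro i hi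
    rw [pk_rel (Finset.mem_range.mp hi) hjm]
    by_cases h0 : i = 0
    · rw [if_pos h0, if_pos h0]; ring
    · rw [if_neg h0, if_neg h0, show (i - 1) + 1 = i by omega]; ring
  rw [Finset.sum_congr rfl h1, Finset.sum_add_distrib,
    show (∑ i ∈ Finset.range m, epsk k m *
        (if i = 0 then 0 else pk k m (j : ℕ) (i - 1) * w ((i - 1) + 1)))
      = epsk k m * ∑ i ∈ Finset.range m,
        (if i = 0 then 0 else pk k m (j : ℕ) (i - 1) * w ((i - 1) + 1)) by
      rw [Finset.mul_sum],
    shift_sum (fun t => pk k m (j : ℕ) t * w (t + 1)), if_neg (by omega : ¬ m = 0),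
    show (∑ i ∈ Finset.range m, pk k m (j : ℕ) i * (w i - w (i + 1)))
      = (∑ i ∈ Finset.range m, pk k m (j : ℕ) i * w i)
        - ∑ i ∈ Finset.range m, pk k m (j : ℕ) i * w (i + 1) by
      rw [← Finset.sum_sub_distrib]
      exact Finset.sum_congr rfl fun i _ => by ring,
    show (∑ i ∈ Finset.range m, - epsk k m * pk k m (j : ℕ) i * w i)
      = - epsk k m * ∑ i ∈ Finset.range m, pk k m (j : ℕ) i * w i by
      rw [Finset.mul_sum]
      exact Finset.sum_congr rfl fun i _ => by ring,
    show (m - 1) + 1 = m by omega]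
  ring

lemma tri_inj (Q : ℕ → ℕ → k)
    (hsup : ∀ i j, i < m → j < m → i + j + 1 < m → Q i j = 0)
    (hdiag : ∀ i j, i < m → j < m → i + j + 1 = m → Q i j ≠ 0)
    (u : ℕ → k) (h : ∀ j : Fin m, ∑ i ∈ Finset.range m, Q (j : ℕ) i * u i = 0) :
    ∀ i, i < m → u i = 0 := by
  have key : ∀ r, r < m → u (m - 1 - r) = 0 := by
    intro r
    induction r using Nat.strong_induction_on with
    | _ r IH =>
      intro hr
      have hj := h ⟨r, hr⟩
      rw [Finset.sum_eq_single (m - 1 - r)] at hj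
      · exact (mul_eq_zero.mp hj).resolve_left (hdiag r (m - 1 - r) hr (by omega) (by omega))
      · intro b hb hbne
        have hbm := Finset.mem_range.mp hb
        by_cases hb2 : r + b + 1 < m
        · rw [hsup r b hr hbm hb2, zero_mul]
        · have h3 : m - 1 - b < r := by omega
          have h4 := IH (m - 1 - b) h3 (by omega)
          rw [show m - 1 - (m - 1 - b) = b by omega] at h4
          rw [h4, mul_zero]
      · intro hnm; exact absurd (Finset.mem_range.mpr (by omega)) hnm
  intro i hi
  have h5 := key (m - 1 - i) (by omega)
  rwa [show m - 1 - (m - 1 - i) = i by omega] at h5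

lemma row_inj (h2 : (2:k) ≠ 0) (u : ℕ → k)
    (h : ∀ j : Fin m, ∑ i ∈ Finset.range m, pk k m (j : ℕ) i * u i = 0) :
    ∀ i, i < m → u i = 0 := by
  refine tri_inj (pk k m) (fun i j _ _ hij => pk_support hij) (fun i j _ _ hij => ?_) u h
  rw [pk_antidiag hij]
  exact mul_ne_zero (pow_ne_zero _ (by norm_num)) (amk_ne h2)

lemma col_inj (h2 : (2:k) ≠ 0) (u : ℕ → k)
    (h : ∀ j : Fin m, ∑ i ∈ Finset.range m, pk k m i (j : ℕ) * u i = 0) :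
    ∀ i, i < m → u i = 0 := by
  refine tri_inj (fun a b => pk k m b a) (fun i j _ _ hij => pk_support (by omega))
    (fun i j _ _ hij => ?_) u h
  show pk k m j i ≠ 0
  rw [pk_antidiag (by omega)]
  exact mul_ne_zero (pow_ne_zero _ (by norm_num)) (amk_ne h2)

end Inj

section Spans
variable {k : Type*} [Field k] {m : ℕ}

lemma mem_CA1_iff (v : AmbA k m) : v ∈ CA1 k m ↔ v.2.2 = 0 := by
  constructor
  · intro hv
    have hle : CA1 k m ≤ LinearMap.ker
        ((LinearMap.snd k (Fin m → k) (Fin m → k)).comp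
          (LinearMap.snd k (Fin (m+1) → k) ((Fin m → k) × (Fin m → k)))) := by
      rw [CA1, span_le]
      rintro w (⟨i, rfl⟩ | ⟨i, rfl⟩) <;> simp [ev, fv, LinearMap.mem_ker]
    simpa [LinearMap.mem_ker] using hle hv
  · intro hz
    have hv : v = (∑ i : Fin (m+1), v.1 i • ev k m i) + ∑ i : Fin m, v.2.1 i • fv k m i := by
      refine Prod.ext ?_ (Prod.ext ?_ ?_)
      · simp only [Prod.fst_add, Prod.fst_sum, ev, fv, Prod.smul_fst, smul_zero]
        funext j
        simp [Finset.sum_apply, Pi.single_apply]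
      · simp only [Prod.snd_add, Prod.snd_sum, ev, fv, Prod.smul_snd, Prod.fst_add,
          Prod.fst_sum, Prod.smul_fst, smul_zero]
        funext j
        simp [Finset.sum_apply, Pi.single_apply]
      · simp only [Prod.snd_add, Prod.snd_sum, ev, fv, Prod.smul_snd, smul_zero]
        funext j
        simp [Finset.sum_apply, hz]
    rw [hv]
    refine add_mem (sum_mem fun i _ => smul_mem _ _ (subset_span ?_))
      (sum_mem fun i _ => smul_mem _ _ (subset_span ?_))
    · exact Or.inl ⟨i, rfl⟩
    · exact Or.inr ⟨i, rfl⟩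

lemma mem_CA2_iff (v : AmbA k m) : v ∈ CA2 k m ↔ v.2.1 = 0 := by
  constructor
  · intro hv
    have hle : CA2 k m ≤ LinearMap.ker
        ((LinearMap.fst k (Fin m → k) (Fin m → k)).comp
          (LinearMap.snd k (Fin (m+1) → k) ((Fin m → k) × (Fin m → k)))) := by
      rw [CA2, span_le]
      rintro w (⟨i, rfl⟩ | ⟨i, rfl⟩) <;> simp [ev, gv, LinearMap.mem_ker]
    simpa [LinearMap.mem_ker] using hle hv
  · intro hy
    have hv : v = (∑ i : Fin (m+1), v.1 i • ev k m i) + ∑ i : Fin m, v.2.2 i • gv k m i := by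
      refine Prod.ext ?_ (Prod.ext ?_ ?_)
      · simp only [Prod.fst_add, Prod.fst_sum, ev, gv, Prod.smul_fst, smul_zero]
        funext j
        simp [Finset.sum_apply, Pi.single_apply]
      · simp only [Prod.snd_add, Prod.snd_sum, ev, gv, Prod.smul_snd, Prod.fst_add,
          Prod.fst_sum, Prod.smul_fst, smul_zero]
        funext j
        simp [Finset.sum_apply, hy]
      · simp only [Prod.snd_add, Prod.snd_sum, ev, gv, Prod.smul_snd, smul_zero]
        funext j
        simp [Finset.sum_apply, Pi.single_apply]
    rw [hv]
    refine add_mem (sum_mem fun i _ => smul_mem _ _ (subset_span ?_))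
      (sum_mem fun i _ => smul_mem _ _ (subset_span ?_))
    · exact Or.inl ⟨i, rfl⟩
    · exact Or.inr ⟨i, rfl⟩

/-- membership in `C₃` in coordinates -/
lemma mem_CA3_iff (v : AmbA k m) :
    v ∈ CA3 k m ↔ ∀ i : Fin m, v.2.1 i + v.2.2 i + v.1 i.succ = 0 := by
  constructor
  · intro hv
    have hle : CA3 k m ≤ LinearMap.ker
        ((LinearMap.pi (fun i : Fin m =>
          (LinearMap.proj i).comp ((LinearMap.fst k (Fin m → k) (Fin m → k)).comp
            (LinearMap.snd k (Fin (m+1) → k) ((Fin m → k) × (Fin m → k))))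
          + (LinearMap.proj i).comp ((LinearMap.snd k (Fin m → k) (Fin m → k)).comp
            (LinearMap.snd k (Fin (m+1) → k) ((Fin m → k) × (Fin m → k))))
          + (LinearMap.proj i.succ).comp
              (LinearMap.fst k (Fin (m+1) → k) ((Fin m → k) × (Fin m → k)))))) := by
      rw [CA3, span_le]
      rintro w ((rfl | ⟨i, rfl⟩) | ⟨i, rfl⟩) <;>
        · simp only [LinearMap.mem_ker, LinearMap.pi_apply, LinearMap.add_apply,
            LinearMap.comp_apply, LinearMap.proj_apply, LinearMap.fst_apply,
            LinearMap.snd_apply, ev, fv, gv, Prod.fst_sub, Prod.snd_sub,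
            Prod.fst_add, Prod.snd_add]
          funext t
          simp [Pi.single_apply, Fin.succ_inj, Fin.ext_iff]
          try omega
    have := hle hv
    simp only [LinearMap.mem_ker, LinearMap.pi_apply, LinearMap.add_apply,
      LinearMap.comp_apply, LinearMap.proj_apply, LinearMap.fst_apply,
      LinearMap.snd_apply] at this
    intro i
    exact congrFun this i
  · intro hc
    have hv : v = v.1 0 • ev k m 0
        + (∑ i : Fin m, v.1 i.succ • (ev k m i.succ - fv k m i))
        + ∑ i : Fin m, (v.2.1 i + v.1 i.succ) • (fv k m i - gv k m i) := by
      refine Prod.ext ?_ (Prod.ext ?_ ?_)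
      · simp only [Prod.fst_add, Prod.fst_sum, ev, fv, gv, Prod.smul_fst, Prod.fst_sub,
          smul_zero, sub_zero]
        funext j
        induction j using Fin.cases with
        | zero =>
          simp [Finset.sum_apply, Pi.single_apply, Fin.ext_iff]
        | succ j' =>
          simp [Finset.sum_apply, Pi.single_apply, Fin.succ_ne_zero, Fin.succ_inj,
            Finset.sum_ite_eq]
      · simp only [Prod.fst_add, Prod.snd_add, Prod.fst_sum, Prod.snd_sum, ev, fv, gv,
          Prod.smul_fst, Prod.smul_snd, Prod.fst_sub, Prod.snd_sub, smul_zero, sub_zero,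
          zero_sub, smul_neg]
        funext j
        simp [Finset.sum_apply, Pi.single_apply]
      · simp only [Prod.fst_add, Prod.snd_add, Prod.fst_sum, Prod.snd_sum, ev, fv, gv,
          Prod.smul_fst, Prod.smul_snd, Prod.fst_sub, Prod.snd_sub, smul_zero, sub_zero,
          zero_sub, smul_neg]
        funext j
        have h := hc j
        simp only [Finset.sum_apply, Pi.add_apply, Pi.zero_apply, Pi.neg_apply,
          Pi.smul_apply, Pi.single_apply, smul_eq_mul, Finset.sum_const_zero, zero_add,
          mul_ite, mul_one, mul_zero]
        rw [Finset.sum_eq_single j (fun b _ hb => by rw [neg_eq_zero, if_neg (Ne.symm hb)])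
          (fun hm => absurd (Finset.mem_univ j) hm), if_pos rfl]
        linear_combination h
    rw [hv]
    refine add_mem (add_mem (smul_mem _ _ (subset_span ?_))
      (sum_mem fun i _ => smul_mem _ _ (subset_span ?_)))
      (sum_mem fun i _ => smul_mem _ _ (subset_span ?_))
    · exact Or.inl (Or.inl rfl)
    · exact Or.inl (Or.inr ⟨i, rfl⟩)
    · exact Or.inr ⟨i, rfl⟩

end Spans

section Final
variable {k : Type*} [Field k] {m : ℕ}

lemma eval_w' (v : AmbA k m) (j : Fin m) :
    Bf k m v (wvv k m j)
      = epsk k m * ∑ i ∈ Finset.range m,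
          pk k m (j : ℕ) i * (cN k m v i - xN k m v i + xN k m v (i + 1)) := by
  rw [eval_w, key_shift (xN k m v) j,
    show (∑ i ∈ Finset.range m,
        pk k m (j : ℕ) i * (cN k m v i - xN k m v i + xN k m v (i + 1)))
      = (∑ i ∈ Finset.range m, pk k m (j : ℕ) i * cN k m v i)
        - ∑ i ∈ Finset.range m, pk k m (j : ℕ) i * (xN k m v i - xN k m v (i + 1)) by
      rw [← Finset.sum_sub_distrib]
      exact Finset.sum_congr rfl fun i _ => by ring]
  ring

lemma coordS (v : AmbA k m) (i : Fin m) :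
    cN k m v (i : ℕ) - xN k m v (i : ℕ) + xN k m v ((i : ℕ) + 1)
      = v.2.1 i + v.2.2 i + v.1 i.succ := by
  unfold cN xN yN zN
  rw [dif_pos (show (i : ℕ) < m + 1 by omega), dif_pos i.isLt, dif_pos i.isLt,
    dif_pos (show (i : ℕ) + 1 < m + 1 by omega)]
  have h1 : (⟨(i : ℕ) + 1, by omega⟩ : Fin (m + 1)) = i.succ := rfl
  rw [h1]
  simp [Fin.eta]
  ring

lemma zN_val (v : AmbA k m) (i : Fin m) : zN k m v (i : ℕ) = v.2.2 i := by
  rw [zN, dif_pos i.isLt]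

lemma yN_val (v : AmbA k m) (i : Fin m) : yN k m v (i : ℕ) = v.2.1 i := by
  rw [yN, dif_pos i.isLt]

theorem final {k : Type*} [Field k] (h2 : (2 : k) ≠ 0) (m : ℕ) :
    ∃ B : LinearMap.BilinForm k (AmbA k m),
      LinearMap.BilinForm.Nondegenerate B ∧
      (∀ x y : AmbA k m, B y x = (-1 : k) ^ m * B x y) ∧
      (∀ v : AmbA k m, (∀ w ∈ IA1 k m, B v w = 0) ↔ v ∈ CA1 k m) ∧
      (∀ v : AmbA k m, (∀ w ∈ IA2 k m, B v w = 0) ↔ v ∈ CA2 k m) ∧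
      (∀ v : AmbA k m, (∀ w ∈ IA3 k m, B v w = 0) ↔ v ∈ CA3 k m) := by
  refine ⟨BB k m, ?_, ?_, ?_, ?_, ?_⟩
  · -- nondegenerate
    refine (LinearMap.IsRefl.nondegenerate_iff_separatingLeft
      (fun x y hxy => by rw [BB_symm, hxy, mul_zero])).mpr ?_
    intro v hv
    have hz : ∀ i, i < m → zN k m v i = 0 := by
      refine row_inj h2 _ fun j => ?_
      have h1 := hv (uvv k m j)
      rw [BB_apply, eval_u] at h1
      exact (mul_eq_zero.mp (neg_eq_zero.mp h1)).resolve_left epsk_ne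
    have hy : ∀ i, i < m → yN k m v i = 0 := by
      refine col_inj h2 _ fun j => ?_
      have h1 := hv (gv k m j)
      rwa [BB_apply, eval_g] at h1
    have hS : ∀ i, i < m → cN k m v i - xN k m v i + xN k m v (i + 1) = 0 := by
      refine row_inj h2 _ fun j => ?_
      have h1 := hv (wvv k m j)
      rw [BB_apply, eval_w'] at h1
      exact (mul_eq_zero.mp h1).resolve_left epsk_ne
    have hx1 : ∀ i, i < m → xN k m v (i + 1) = 0 := by
      intro i hi
      have h1 := hS i hi
      have h3 : cN k m v i - xN k m v i = yN k m v i + zN k m v i := by unfold cN; ring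
      rw [h3, hy i hi, hz i hi] at h1
      linear_combination h1
    have hx0 : xN k m v 0 = 0 := by
      have he := hv (ev k m (Fin.last m))
      rw [BB_apply, eval_e] at he
      rcases Nat.eq_zero_or_pos m with hm | hm
      · subst hm
        rw [Finset.range_zero, Finset.sum_empty, sm, if_neg (by omega)] at he
        linear_combination he
      · have hxm : xN k m v m = 0 := by
          have h1 := hx1 (m - 1) (by omega)
          rwa [show m - 1 + 1 = m by omega] at h1
        rw [hxm, Finset.sum_eq_single 0 (fun b hb hb0 => by
            have hbm := Finset.mem_range.mp hb
            have hbn : bN k m v b = 0 := by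
              obtain ⟨b', rfl⟩ : ∃ b', b = b' + 1 := ⟨b - 1, by omega⟩
              unfold bN
              rw [hy _ hbm, hx1 b' (by omega)]
              ring
            rw [hbn, mul_zero])
          (fun hmem => absurd (Finset.mem_range.mpr hm) hmem)] at he
        have hbn0 : bN k m v 0 = xN k m v 0 := by unfold bN; rw [hy 0 hm]; ring
        rw [hbn0, mul_zero, add_zero, pk_antidiag (by omega : 0 + (m - 1) + 1 = m),
          pow_zero, one_mul] at he
        exact (mul_eq_zero.mp he).resolve_left (amk_ne h2)
    have hxall : ∀ (i : ℕ) (hi : i < m + 1), v.1 ⟨i, hi⟩ = 0 := by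
      intro i hi
      rcases i with _ | n
      · rw [xN, dif_pos (show 0 < m + 1 by omega)] at hx0
        exact hx0
      · have hn : n < m := by omega
        have h1 := hx1 n hn
        rw [xN, dif_pos (show n + 1 < m + 1 by omega)] at h1
        exact h1
    refine Prod.ext ?_ (Prod.ext ?_ ?_)
    · funext j
      rcases j with ⟨i, hi⟩
      exact hxall i hi
    · funext i
      have h1 := hy i i.isLt
      rwa [yN_val] at h1
    · funext i
      have h1 := hz i i.isLt
      rwa [zN_val] at h1
  · -- symmetry
    intro x y
    have := BB_symm k m x y
    rwa [epsk] at this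
  · -- IA1 / CA1
    intro v
    constructor
    · intro H
      rw [mem_CA1_iff]
      have hz : ∀ i, i < m → zN k m v i = 0 := by
        refine row_inj h2 _ fun j => ?_
        have h1 := H (uvv k m j) (subset_span ⟨j, rfl⟩)
        rw [BB_apply, eval_u] at h1
        exact (mul_eq_zero.mp (neg_eq_zero.mp h1)).resolve_left epsk_ne
      funext i
      have h1 := hz i i.isLt
      rwa [zN_val] at h1
    · intro hv w hw
      rw [mem_CA1_iff] at hv
      have hle : IA1 k m ≤ LinearMap.ker (BB k m v) := by
        rw [IA1, span_le]
        rintro w' ⟨j, rfl⟩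
        simp only [SetLike.mem_coe, LinearMap.mem_ker]
        show BB k m v (uvv k m j) = 0
        rw [BB_apply, eval_u, Finset.sum_eq_zero fun i hi => by
          rw [zN, dif_pos (Finset.mem_range.mp hi), hv]
          simp]
        ring
      exact LinearMap.mem_ker.mp (hle hw)
  · -- IA2 / CA2
    intro v
    constructor
    · intro H
      rw [mem_CA2_iff]
      have hy : ∀ i, i < m → yN k m v i = 0 := by
        refine col_inj h2 _ fun j => ?_
        have h1 := H (gv k m j) (subset_span ⟨j, rfl⟩)
        rwa [BB_apply, eval_g] at h1
      funext i
      have h1 := hy i i.isLt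
      rwa [yN_val] at h1
    · intro hv w hw
      rw [mem_CA2_iff] at hv
      have hle : IA2 k m ≤ LinearMap.ker (BB k m v) := by
        rw [IA2, span_le]
        rintro w' ⟨j, rfl⟩
        simp only [SetLike.mem_coe, LinearMap.mem_ker]
        show BB k m v (gv k m j) = 0
        rw [BB_apply, eval_g, Finset.sum_eq_zero fun i hi => by
          rw [yN, dif_pos (Finset.mem_range.mp hi), hv]
          simp]
      exact LinearMap.mem_ker.mp (hle hw)
  · -- IA3 / CA3
    intro v
    constructor
    · intro H
      rw [mem_CA3_iff]
      have hS : ∀ i, i < m → cN k m v i - xN k m v i + xN k m v (i + 1) = 0 := by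
        refine row_inj h2 _ fun j => ?_
        have h1 := H (wvv k m j) (subset_span ⟨j, rfl⟩)
        rw [BB_apply, eval_w'] at h1
        exact (mul_eq_zero.mp h1).resolve_left epsk_ne
      intro i
      have h1 := hS (i : ℕ) i.isLt
      rwa [coordS] at h1
    · intro hv w hw
      rw [mem_CA3_iff] at hv
      have hle : IA3 k m ≤ LinearMap.ker (BB k m v) := by
        rw [IA3, span_le]
        rintro w' ⟨j, rfl⟩
        simp only [SetLike.mem_coe, LinearMap.mem_ker]
        show BB k m v (wvv k m j) = 0
        rw [BB_apply, eval_w', Finset.sum_eq_zero fun i hi => by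
          have him := Finset.mem_range.mp hi
          have h1 : cN k m v i - xN k m v i + xN k m v (i + 1) = 0 := by
            have h2' := hv ⟨i, him⟩
            have h3 := coordS v ⟨i, him⟩
            rw [h2'] at h3
            exact h3
          rw [h1, mul_zero]]
        ring
      exact LinearMap.mem_ker.mp (hle hw)

end Final

end
end StmtAux

/-- Over a field `k` of characteristic `≠ 2`, the standard-basis
normal form of the discrete-type self-dual indecomposable sextuple `A(3m+1, 0)` admits
a compatible `(−1)^m`-symmetric form: a nondegenerate bilinear form `B` on the ambient
space with `B(y, x) = (−1)^m B(x, y)` such that the `B`-orthogonal of `Iᵢ` is `Cᵢ` for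
`i = 1, 2, 3`.  In particular, for `m` odd it admits a compatible symplectic form, and
for `m` even a compatible symmetric form. -/
theorem compatible_form_for_A_3m_plus_1
    {k : Type*} [Field k] (h2 : (2 : k) ≠ 0) (m : ℕ) :
    ∃ B : LinearMap.BilinForm k (AmbA k m),
      LinearMap.BilinForm.Nondegenerate B ∧
      (∀ x y : AmbA k m, B y x = (-1 : k) ^ m * B x y) ∧
      (∀ v : AmbA k m, (∀ w ∈ IA1 k m, B v w = 0) ↔ v ∈ CA1 k m) ∧
      (∀ v : AmbA k m, (∀ w ∈ IA2 k m, B v w = 0) ↔ v ∈ CA2 k m) ∧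
      (∀ v : AmbA k m, (∀ w ∈ IA3 k m, B v w = 0) ↔ v ∈ CA3 k m) :=
  StmtAux.final h2 m
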